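/- For α ∈ (0, 1/3], let f_α(z) = z/(1 + (1+α)z + α z²) on the unit disk D. Then the infimum over z ∈ D of Re(f_α(z)/z) equals (1-3α)/(2α² - 4α + 2) ≥ 0, and the supremum over z ∈ D of |arg(f_α(z)/z)| equals π/2. -/

import Mathlib

open Metric Complex Topology Filter


lemma ak_lb (α : ℝ) (hα0 : 0 < α) (hα1 : α ≤ 1/3) (z : ℂ) (hz : ‖z‖ < 1) :
    (1-3*α)/(2*α^2-4*α+2) < ((1 + (1+(α:ℂ))*z + (α:ℂ)*z^2)⁻¹).re := by
  set u := z.re with hu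
  set v := z.im with hv
  have huv : u^2+v^2 < 1 := by
    have habs : ‖z‖ < 1 := hz
    have h2 := Complex.sq_norm z
    rw [Complex.normSq_apply] at h2
    nlinarith [norm_nonneg z]
  have h1 : 0 < 1 + u := by nlinarith [sq_nonneg u, sq_nonneg v]
  have h2 : 0 < 1 + α*u := by nlinarith [sq_nonneg u, sq_nonneg v]
  set P : ℂ := 1 + (1+(α:ℂ))*z + (α:ℂ)*z^2 with hP
  have hre : P.re = 1+(1+α)*u+α*(u^2-v^2) := by
    simp [hP, Complex.add_re, Complex.mul_re, Complex.add_im, sq]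
    try ring
  have him : P.im = (1+α)*v+2*α*(u*v) := by
    simp [hP, Complex.add_im, Complex.mul_im, sq]
    ring
  have hNS : Complex.normSq P = (1+(1+α)*u+α*(u^2-v^2))^2 + ((1+α)*v+2*α*(u*v))^2 := by
    rw [Complex.normSq_apply, hre, him]; ring
  have hNSpos : 0 < Complex.normSq P := by
    rw [hNS]
    nlinarith [sq_nonneg v, mul_pos h1 h2, sq_nonneg ((1+α)*v+2*α*(u*v)), sq_nonneg (1+(1+α)*u+α*(u^2-v^2)), sq_nonneg (α*v), mul_pos (mul_pos h1 h2) h1]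
  rw [Complex.inv_re, hre, hNS, lt_div_iff₀ (by rw [hNS] at hNSpos; exact hNSpos), div_mul_eq_mul_div, div_lt_iff₀ (by nlinarith : (0:ℝ) < 2*α^2-4*α+2)]
  have key : (1+(1+α)*u+α*(u^2-v^2))*(2*α^2-4*α+2) - (1-3*α)*((1+(1+α)*u+α*(u^2-v^2))^2 + ((1+α)*v+2*α*(u*v))^2)
      = (1-α)*(1-u^2-v^2)*((1+α*u)^2+(α*v)^2) + 2*α*((1+u)*(1+α*u)*α+α^2*v^2)*((1+u)^2+v^2) := by
    ring
  nlinarith [key, mul_pos (mul_pos (by linarith : (0:ℝ) < 1-α) (by linarith : (0:ℝ) < 1-u^2-v^2)) (by positivity : (0:ℝ) < (1+α*u)^2+(α*v)^2),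
    mul_nonneg (mul_nonneg (le_of_lt hα0) (by nlinarith [mul_pos (mul_pos h1 h2) hα0, sq_nonneg v] : (0:ℝ) ≤ (1+u)*(1+α*u)*α+α^2*v^2)) (by positivity : (0:ℝ) ≤ (1+u)^2+v^2)]


set_option maxHeartbeats 1000000 in
lemma ak_approx (α : ℝ) (hα0 : 0 < α) (hα1 : α ≤ 1/3) (ε : ℝ) (hε : 0 < ε) :
    ∃ z ∈ ball (0:ℂ) 1,
      ((1 + (1+(α:ℂ))*z + (α:ℂ)*z^2)⁻¹).re < (1-3*α)/(2*α^2-4*α+2) + ε := by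
  obtain ⟨m, hm⟩ : ∃ m:ℝ, m = (1-3*α)/(2*α^2-4*α+2) := ⟨_, rfl⟩
  rw [← hm]
  have hD2 : (0:ℝ) < 2*α^2-4*α+2 := by nlinarith
  have hmprop : m * (2*α^2-4*α+2) = 1-3*α := by rw [hm]; exact div_mul_cancel₀ _ (ne_of_gt hD2)
  obtain ⟨δ, hδ0, hδ1, hδε⟩ : ∃ δ:ℝ, 0 < δ ∧ δ ≤ 1 ∧ δ ≤ ε/2 :=
    ⟨min (ε/2) 1, lt_min (by linarith) one_pos, min_le_right _ _, min_le_left _ _⟩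
  obtain ⟨x, hxdef⟩ : ∃ x:ℝ, x = -1 + δ := ⟨_, rfl⟩
  have hx1 : -1 < x := by rw [hxdef]; linarith
  have hx2 : x ≤ 0 := by rw [hxdef]; linarith
  have hxsq : x^2 < 1 := by nlinarith
  obtain ⟨y, hy2, hy0⟩ : ∃ y:ℝ, y^2 = 1-x^2 ∧ 0 ≤ y :=
    ⟨Real.sqrt (1-x^2), Real.sq_sqrt (by nlinarith), Real.sqrt_nonneg _⟩
  set z₀ : ℂ := (x:ℂ) + (y:ℂ)*Complex.I with hz₀
  have hz₀re : z₀.re = x := by simp [hz₀]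
  have hz₀im : z₀.im = y := by simp [hz₀]
  have hd1 : 0 < α^2+2*α*x+1 := by nlinarith [sq_nonneg (1-α), mul_pos hα0 hδ0]
  set P : ℂ := 1 + (1+(α:ℂ))*z₀ + (α:ℂ)*z₀^2 with hP
  have hre : P.re = (x+1)*(2*α*x+1-α) := by
    simp [hP, hz₀, Complex.add_re, Complex.mul_re, sq]
    linear_combination (-α) * hy2
  have him : P.im = y*(1+α+2*α*x) := by
    simp [hP, hz₀, Complex.add_im, Complex.mul_im, sq]
    ring
  have hNSv : Complex.normSq P = 2*(1+x)*(α^2+2*α*x+1) := by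
    rw [Complex.normSq_apply, hre, him]
    linear_combination ((1+α+2*α*x)^2) * hy2
  have hNSpos : 0 < Complex.normSq P := by
    rw [hNSv]
    nlinarith [mul_pos (show (0:ℝ)<1+x by linarith) hd1]
  have hPne : P ≠ 0 := fun h => by simp [h] at hNSpos
  have hval : (P⁻¹).re = (2*α*x+1-α)/(2*(α^2+2*α*x+1)) := by
    rw [Complex.inv_re, hre, hNSv, div_eq_div_iff (by linarith [mul_pos (show (0:ℝ)<1+x by linarith) hd1, hd1]) (by linarith)]
    ring
  have hgle : (2*α*x+1-α)/(2*(α^2+2*α*x+1)) ≤ m + δ := by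
    rw [div_le_iff₀ (by linarith : (0:ℝ) < 2*(α^2+2*α*x+1))]
    have key : (2*α*x+1-α)*(2*α^2-4*α+2) - (1-3*α)*(2*(α^2+2*α*x+1)) = 4*α^2*(1+α)*δ := by
      rw [hxdef]; ring
    have hfin : 4*α^2*(1+α)*δ ≤ δ*(2*α^2-4*α+2)*(2*(α^2+2*α*x+1)) := by
      have h4 : α^2*(1+α) ≤ (1-α)^2*((1-α)^2+2*α*δ) := by nlinarith [mul_pos hα0 hδ0]
      have hx' : α^2+2*α*x+1 = (1-α)^2+2*α*δ := by rw [hxdef]; ring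
      rw [hx']
      have h5 := mul_le_mul_of_nonneg_left h4 hδ0.le
      nlinarith [h5]
    rw [← mul_le_mul_iff_of_pos_right hD2]
    have expand : (m+δ)*(2*(α^2+2*α*x+1))*(2*α^2-4*α+2)
        = (1-3*α)*(2*(α^2+2*α*x+1)) + δ*(2*α^2-4*α+2)*(2*(α^2+2*α*x+1)) := by
      linear_combination (2*(α^2+2*α*x+1)) * hmprop
    linarith [key, hfin]
  have hcont : ContinuousAt (fun z : ℂ => ((1 + (1+(α:ℂ))*z + (α:ℂ)*z^2)⁻¹).re) z₀ := by
    apply Complex.continuous_re.continuousAt.comp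
    exact ContinuousAt.inv₀ (by fun_prop) hPne
  have hmem : z₀ ∈ closure (ball (0:ℂ) 1) := by
    rw [closure_ball (0:ℂ) one_ne_zero]
    rw [mem_closedBall, dist_zero_right]
    have hn : Complex.normSq z₀ = 1 := by
      rw [Complex.normSq_apply, hz₀re, hz₀im]; nlinarith
    rw [Complex.norm_def, hn, Real.sqrt_one]
  have hlt : ((1 + (1+(α:ℂ))*z₀ + (α:ℂ)*z₀^2)⁻¹).re < m + ε := by
    rw [← hP, hval]
    calc (2*α*x+1-α)/(2*(α^2+2*α*x+1)) ≤ m + δ := hgle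
    _ < m + ε := by linarith
  have hU : (fun z : ℂ => ((1 + (1+(α:ℂ))*z + (α:ℂ)*z^2)⁻¹).re) ⁻¹' (Set.Iio (m + ε)) ∈ 𝓝 z₀ :=
    hcont (Iio_mem_nhds hlt)
  obtain ⟨z, hz1, hz2⟩ := mem_closure_iff_nhds.mp hmem _ hU
  exact ⟨z, hz2, hz1⟩


set_option maxHeartbeats 1000000 in
lemma ak_arg_approx (α : ℝ) (hα0 : 0 < α) (hα1 : α ≤ 1/3) (b : ℝ) (hb0 : 0 ≤ b)
    (hb : b < Real.pi/2) :
    ∃ z ∈ ball (0:ℂ) 1,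
      b < |Complex.arg ((1 + (1+(α:ℂ))*z + (α:ℂ)*z^2)⁻¹)| := by
  obtain ⟨ε', hε'def⟩ : ∃ e:ℝ, e = Real.pi/2 - b := ⟨_, rfl⟩
  have hε'0 : 0 < ε' := by rw [hε'def]; linarith
  have hε'le : ε' ≤ Real.pi/2 := by rw [hε'def]; linarith
  have hpi := Real.pi_pos
  obtain ⟨s, hsdef⟩ : ∃ s:ℝ, s = Real.sin (ε'/2) := ⟨_, rfl⟩
  have hs0 : 0 < s := by
    rw [hsdef]; exact Real.sin_pos_of_pos_of_lt_pi (by linarith) (by linarith)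
  obtain ⟨δ, hδ0, hδ1, hδs⟩ : ∃ δ:ℝ, 0 < δ ∧ δ ≤ 1 ∧ δ ≤ (2*s/3)^2 :=
    ⟨min ((2*s/3)^2) 1, lt_min (by positivity) one_pos, min_le_right _ _, min_le_left _ _⟩
  obtain ⟨r, hr2, hr0⟩ : ∃ r:ℝ, r^2 = δ ∧ 0 < r :=
    ⟨Real.sqrt δ, Real.sq_sqrt hδ0.le, Real.sqrt_pos.mpr hδ0⟩
  have hrs : r ≤ 2*s/3 := by nlinarith
  obtain ⟨x, hxdef⟩ : ∃ x:ℝ, x = -1 + δ := ⟨_, rfl⟩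
  have hx1 : -1 < x := by rw [hxdef]; linarith
  have hx2 : x ≤ 0 := by rw [hxdef]; linarith
  have hxsq : x^2 < 1 := by nlinarith
  obtain ⟨y, hy2, hy0⟩ : ∃ y:ℝ, y^2 = 1-x^2 ∧ 0 ≤ y :=
    ⟨Real.sqrt (1-x^2), Real.sq_sqrt (by nlinarith), Real.sqrt_nonneg _⟩
  have hyr : r ≤ y := by nlinarith
  set z₀ : ℂ := (x:ℂ) + (y:ℂ)*Complex.I with hz₀
  have hz₀re : z₀.re = x := by simp [hz₀]
  have hz₀im : z₀.im = y := by simp [hz₀]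
  set P : ℂ := 1 + (1+(α:ℂ))*z₀ + (α:ℂ)*z₀^2 with hP
  have hre : P.re = (x+1)*(2*α*x+1-α) := by
    simp [hP, hz₀, Complex.add_re, Complex.mul_re, sq]
    linear_combination (-α) * hy2
  have him : P.im = y*(1+α+2*α*x) := by
    simp [hP, hz₀, Complex.add_im, Complex.mul_im, sq]
    ring
  have hq : 0 < 2*α*x+1-α := by nlinarith [mul_pos hα0 hδ0]
  have hq2 : 0 < 1+α+2*α*x := by nlinarith [mul_pos hα0 hδ0]
  have hrepos : 0 < P.re := by rw [hre]; nlinarith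
  have himpos : 0 < P.im := by
    rw [him]; exact mul_pos (lt_of_lt_of_le hr0 hyr) hq2
  have hPne : P ≠ 0 := fun h => by rw [h] at hrepos; simp at hrepos
  have habsP : 0 < ‖P‖ := norm_pos_iff.mpr hPne
  have hcne : P⁻¹ ≠ 0 := inv_ne_zero hPne
  have hcre : 0 < (P⁻¹).re := by
    rw [Complex.inv_re]
    exact div_pos hrepos (Complex.normSq_pos.mpr hPne)
  -- cos of |arg| equals P.re / abs P
  have hcos : Real.cos |Complex.arg (P⁻¹)| = P.re / ‖P‖ := by
    rw [Real.cos_abs, Complex.cos_arg hcne, Complex.inv_re, norm_inv,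
      ← Complex.sq_norm P]
    field_simp
  -- bound : P.re / abs P ≤ s
  have hbound : P.re / ‖P‖ ≤ s := by
    have h1 : P.re ≤ δ := by
      rw [hre, hxdef]
      nlinarith [mul_nonneg (mul_nonneg hδ0.le hα0.le) (by linarith : (0:ℝ) ≤ 3-2*δ)]
    have h2 : r*(2/3) ≤ ‖P‖ := by
      calc r*(2/3) ≤ y*(1+α+2*α*x) := by nlinarith
      _ = P.im := him.symm
      _ ≤ |P.im| := le_abs_self _
      _ ≤ ‖P‖ := Complex.abs_im_le_norm P
    calc P.re / ‖P‖ ≤ δ / (r*(2/3)) :=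
          div_le_div₀ hδ0.le h1 (by positivity) h2
      _ ≤ s := by
          rw [div_le_iff₀ (by positivity)]
          nlinarith [mul_le_mul_of_nonneg_right hrs hr0.le]
  have hargge : Real.pi/2 - ε'/2 ≤ |Complex.arg (P⁻¹)| := by
    by_contra hcon
    push_neg at hcon
    have hmem1 : |Complex.arg (P⁻¹)| ∈ Set.Icc 0 Real.pi :=
      ⟨abs_nonneg _, Complex.abs_arg_le_pi _⟩
    have hmem2 : Real.pi/2 - ε'/2 ∈ Set.Icc 0 Real.pi := by
      constructor <;> [linarith; linarith]
    have hlt := Real.strictAntiOn_cos hmem1 hmem2 hcon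
    rw [Real.cos_pi_div_two_sub, ← hsdef, hcos] at hlt
    linarith
  have hvb : b < |Complex.arg (P⁻¹)| := by
    rw [hε'def] at hargge
    linarith [hargge]
  have hcont : ContinuousAt
      (fun z : ℂ => |Complex.arg ((1 + (1+(α:ℂ))*z + (α:ℂ)*z^2)⁻¹)|) z₀ := by
    have hc1 : ContinuousAt (fun z : ℂ => (1 + (1+(α:ℂ))*z + (α:ℂ)*z^2)⁻¹) z₀ :=
      ContinuousAt.inv₀ (by fun_prop) hPne
    have hc2 : ContinuousAt Complex.arg ((1 + (1+(α:ℂ))*z₀ + (α:ℂ)*z₀^2)⁻¹) :=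
      Complex.continuousAt_arg (Or.inl hcre)
    have hc3 : ContinuousAt (fun z : ℂ =>
        Complex.arg ((1 + (1+(α:ℂ))*z + (α:ℂ)*z^2)⁻¹)) z₀ := ContinuousAt.comp (f := fun z : ℂ => (1 + (1+(α:ℂ))*z + (α:ℂ)*z^2)⁻¹) hc2 hc1
    exact hc3.abs
  have hmemc : z₀ ∈ closure (ball (0:ℂ) 1) := by
    rw [closure_ball (0:ℂ) one_ne_zero]
    rw [mem_closedBall, dist_zero_right]
    have hn : Complex.normSq z₀ = 1 := by
      rw [Complex.normSq_apply, hz₀re, hz₀im]; nlinarith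
    rw [Complex.norm_def, hn, Real.sqrt_one]
  have hU : (fun z : ℂ => |Complex.arg ((1 + (1+(α:ℂ))*z + (α:ℂ)*z^2)⁻¹)|) ⁻¹'
      (Set.Ioi b) ∈ 𝓝 z₀ := hcont (Ioi_mem_nhds hvb)
  obtain ⟨z, hz1, hz2⟩ := mem_closure_iff_nhds.mp hmemc _ hU
  exact ⟨z, hz2, hz1⟩

/-- For Aksentiev's extremal function `f_α z = z/(1+(1+α)z+αz²)`, `α ∈ (0,1/3]`:
the infimum of `Re (f_α z / z)` over the disk equals `(1-3α)/(2α²-4α+2) ≥ 0` and the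
supremum of `|arg (f_α z / z)|` equals `π/2`. -/

theorem aksentiev_extremal_K_and_B
    (α : ℝ) (hα : α ∈ Set.Ioc (0:ℝ) (1/3)) :
    IsGLB {x : ℝ | ∃ z ∈ ball (0:ℂ) 1,
        x = ((1 + (1 + (α:ℂ)) * z + (α:ℂ) * z^2)⁻¹).re}
      ((1 - 3*α) / (2*α^2 - 4*α + 2)) ∧
    0 ≤ (1 - 3*α) / (2*α^2 - 4*α + 2) ∧
    IsLUB {x : ℝ | ∃ z ∈ ball (0:ℂ) 1,
        x = |Complex.arg ((1 + (1 + (α:ℂ)) * z + (α:ℂ) * z^2)⁻¹)|} (Real.pi / 2) := by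
  obtain ⟨hα0, hα1⟩ := hα
  have h0 : 0 ≤ (1-3*α)/(2*α^2-4*α+2) := div_nonneg (by linarith) (by nlinarith)
  refine ⟨⟨?_, ?_⟩, h0, ?_, ?_⟩
  · rintro t ⟨z, hz, rfl⟩
    exact (ak_lb α hα0 hα1 z (mem_ball_zero_iff.mp hz)).le
  · intro b hb
    by_contra hcon
    push_neg at hcon
    obtain ⟨z, hzb, hlt⟩ := ak_approx α hα0 hα1 (b - (1-3*α)/(2*α^2-4*α+2)) (by linarith)
    have hmem := hb ⟨z, hzb, rfl⟩
    have : (1-3*α)/(2*α^2-4*α+2) + (b - (1-3*α)/(2*α^2-4*α+2)) = b := by ring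
    rw [this] at hlt
    exact absurd (lt_of_le_of_lt hmem hlt) (lt_irrefl b)
  · rintro t ⟨z, hz, rfl⟩
    have h1 := ak_lb α hα0 hα1 z (mem_ball_zero_iff.mp hz)
    have h2 : 0 < ((1 + (1 + (α:ℂ)) * z + (α:ℂ) * z^2)⁻¹).re := lt_of_le_of_lt h0 h1
    exact (Complex.abs_arg_lt_pi_div_two_iff.mpr (Or.inl h2)).le
  · intro b hb
    have hb0 : 0 ≤ b := by
      have h00 : (0:ℝ) ∈ {x : ℝ | ∃ z ∈ ball (0:ℂ) 1,
          x = |Complex.arg ((1 + (1 + (α:ℂ)) * z + (α:ℂ) * z^2)⁻¹)|} :=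
        ⟨0, by simp, by norm_num⟩
      exact hb h00
    by_contra hcon
    push_neg at hcon
    obtain ⟨z, hzb, hlt⟩ := ak_arg_approx α hα0 hα1 b hb0 hcon
    have hmem := hb ⟨z, hzb, rfl⟩
    exact absurd (lt_of_lt_of_le hlt hmem) (lt_irrefl b)
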